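/- For every x ∈ (0,1): ( x⁵/60 + 11x⁷/840 ) / (2+√(1−x²)) < arcsin x − 3x/(2+√(1−x²)) < ( x⁵/60 + (π − 181/60)·x⁷ ) / (2+√(1−x²)). -/

import Mathlib

open Real

set_option maxHeartbeats 4000000

private lemma mono0 {f g : ℝ → ℝ} (hder : ∀ x, HasDerivAt f (g x) x)
    (hg : ∀ x, 0 < x → 0 ≤ g x) {t : ℝ} (ht : 0 ≤ t) : f 0 ≤ f t := by
  have hdiff : Differentiable ℝ f := fun x => (hder x).differentiableAt
  have hmono := monotoneOn_of_deriv_nonneg (convex_Ici (0:ℝ))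
      hdiff.continuous.continuousOn hdiff.differentiableOn
      (fun x hx => by
        rw [(hder x).deriv]
        refine hg x ?_
        simpa [interior_Ici] using hx)
  exact hmono Set.self_mem_Ici (Set.mem_Ici.2 ht) ht

private lemma sin_ge3 {t : ℝ} (ht : 0 ≤ t) : t - t ^ 3 / 6 ≤ Real.sin t := by
  have h := mono0 (f := fun x => Real.sin x - x + x ^ 3 / 6)
      (g := fun x => Real.cos x - 1 + x ^ 2 / 2)
      (fun x => by
        have h1 := ((Real.hasDerivAt_sin x).sub (hasDerivAt_id x)).add
          ((hasDerivAt_pow 3 x).div_const 6)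
        refine h1.congr_deriv ?_
        push_cast
        ring)
      (fun x _ => by linarith [Real.one_sub_sq_div_two_le_cos (x := x)]) ht
  norm_num at h
  linarith

private lemma cos_le4 {t : ℝ} (ht : 0 ≤ t) :
    Real.cos t ≤ 1 - t ^ 2 / 2 + t ^ 4 / 24 := by
  have h := mono0 (f := fun x => 1 - x ^ 2 / 2 + x ^ 4 / 24 - Real.cos x)
      (g := fun x => Real.sin x - (x - x ^ 3 / 6))
      (fun x => by
        have h1 := (((hasDerivAt_const x (1:ℝ)).sub ((hasDerivAt_pow 2 x).div_const 2)).add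
          ((hasDerivAt_pow 4 x).div_const 24)).sub (Real.hasDerivAt_cos x)
        refine h1.congr_deriv ?_
        push_cast
        ring)
      (fun x hx => by linarith [sin_ge3 hx.le]) ht
  norm_num at h
  linarith

private lemma sin_le5 {t : ℝ} (ht : 0 ≤ t) :
    Real.sin t ≤ t - t ^ 3 / 6 + t ^ 5 / 120 := by
  have h := mono0 (f := fun x => x - x ^ 3 / 6 + x ^ 5 / 120 - Real.sin x)
      (g := fun x => 1 - x ^ 2 / 2 + x ^ 4 / 24 - Real.cos x)
      (fun x => by
        have h1 := (((hasDerivAt_id x).sub ((hasDerivAt_pow 3 x).div_const 6)).add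
          ((hasDerivAt_pow 5 x).div_const 120)).sub (Real.hasDerivAt_sin x)
        refine h1.congr_deriv ?_
        push_cast
        ring)
      (fun x hx => by linarith [cos_le4 hx.le]) ht
  norm_num at h
  linarith

private lemma cos_ge6 {t : ℝ} (ht : 0 ≤ t) :
    1 - t ^ 2 / 2 + t ^ 4 / 24 - t ^ 6 / 720 ≤ Real.cos t := by
  have h := mono0 (f := fun x => Real.cos x - (1 - x ^ 2 / 2 + x ^ 4 / 24 - x ^ 6 / 720))
      (g := fun x => (x - x ^ 3 / 6 + x ^ 5 / 120) - Real.sin x)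
      (fun x => by
        have h1 := (Real.hasDerivAt_cos x).sub
          ((((hasDerivAt_const x (1:ℝ)).sub ((hasDerivAt_pow 2 x).div_const 2)).add
            ((hasDerivAt_pow 4 x).div_const 24)).sub ((hasDerivAt_pow 6 x).div_const 720))
        refine h1.congr_deriv ?_
        push_cast
        ring)
      (fun x hx => by linarith [sin_le5 hx.le]) ht
  norm_num at h
  linarith

private lemma sin_ge7 {t : ℝ} (ht : 0 ≤ t) :
    t - t ^ 3 / 6 + t ^ 5 / 120 - t ^ 7 / 5040 ≤ Real.sin t := by
  have h := mono0 (f := fun x => Real.sin x - (x - x ^ 3 / 6 + x ^ 5 / 120 - x ^ 7 / 5040))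
      (g := fun x => Real.cos x - (1 - x ^ 2 / 2 + x ^ 4 / 24 - x ^ 6 / 720))
      (fun x => by
        have h1 := (Real.hasDerivAt_sin x).sub
          ((((hasDerivAt_id x).sub ((hasDerivAt_pow 3 x).div_const 6)).add
            ((hasDerivAt_pow 5 x).div_const 120)).sub ((hasDerivAt_pow 7 x).div_const 5040))
        refine h1.congr_deriv ?_
        push_cast
        ring)
      (fun x hx => by linarith [cos_ge6 hx.le]) ht
  norm_num at h
  linarith

private lemma cos_le8 {t : ℝ} (ht : 0 ≤ t) :
    Real.cos t ≤ 1 - t ^ 2 / 2 + t ^ 4 / 24 - t ^ 6 / 720 + t ^ 8 / 40320 := by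
  have h := mono0
      (f := fun x => (1 - x ^ 2 / 2 + x ^ 4 / 24 - x ^ 6 / 720 + x ^ 8 / 40320) - Real.cos x)
      (g := fun x => Real.sin x - (x - x ^ 3 / 6 + x ^ 5 / 120 - x ^ 7 / 5040))
      (fun x => by
        have h1 := ((((hasDerivAt_const x (1:ℝ)).sub ((hasDerivAt_pow 2 x).div_const 2)).add
            ((hasDerivAt_pow 4 x).div_const 24)).sub ((hasDerivAt_pow 6 x).div_const 720)).add
            ((hasDerivAt_pow 8 x).div_const 40320) |>.sub (Real.hasDerivAt_cos x)
        refine h1.congr_deriv ?_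
        push_cast
        ring)
      (fun x hx => by linarith [sin_ge7 hx.le]) ht
  norm_num at h
  linarith

private lemma sin_le9 {t : ℝ} (ht : 0 ≤ t) :
    Real.sin t ≤ t - t ^ 3 / 6 + t ^ 5 / 120 - t ^ 7 / 5040 + t ^ 9 / 362880 := by
  have h := mono0
      (f := fun x => (x - x ^ 3 / 6 + x ^ 5 / 120 - x ^ 7 / 5040 + x ^ 9 / 362880) - Real.sin x)
      (g := fun x => (1 - x ^ 2 / 2 + x ^ 4 / 24 - x ^ 6 / 720 + x ^ 8 / 40320) - Real.cos x)
      (fun x => by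
        have h1 := ((((hasDerivAt_id x).sub ((hasDerivAt_pow 3 x).div_const 6)).add
            ((hasDerivAt_pow 5 x).div_const 120)).sub ((hasDerivAt_pow 7 x).div_const 5040)).add
            ((hasDerivAt_pow 9 x).div_const 362880) |>.sub (Real.hasDerivAt_sin x)
        refine h1.congr_deriv ?_
        push_cast
        ring)
      (fun x hx => by linarith [cos_le8 hx.le]) ht
  norm_num at h
  linarith

private lemma Qpos (u : ℝ) (hu : 0 < u) (hu2 : u ≤ 987/400) :
    (0:ℝ) < (401/40320) - (929/129600) * u + (419/155520) * u ^ 2 - (31271/46656000) * u ^ 3 + (2809/23328000) * u ^ 4 - (18241/1119744000) * u ^ 5 + (796711/470292480000) * u ^ 6 - (2291/16796160000) * u ^ 7 + (12649/1492992000000) * u ^ 8 - (10747/26873856000000) * u ^ 9 + (187/13436928000000) * u ^ 10 - (121/358318080000000) * u ^ 11 + (11/2149908480000000) * u ^ 12 - (11/300987187200000000) * u ^ 13 := by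
  have hq0 : (0:ℝ) ≤ u ^ 0 * ((987/400) - u) ^ 13 := mul_nonneg (pow_nonneg hu.le 0) (pow_nonneg (by linarith) 13)
  have hq1 : (0:ℝ) ≤ u ^ 1 * ((987/400) - u) ^ 12 := mul_nonneg (pow_nonneg hu.le 1) (pow_nonneg (by linarith) 12)
  have hq2 : (0:ℝ) ≤ u ^ 2 * ((987/400) - u) ^ 11 := mul_nonneg (pow_nonneg hu.le 2) (pow_nonneg (by linarith) 11)
  have hq3 : (0:ℝ) ≤ u ^ 3 * ((987/400) - u) ^ 10 := mul_nonneg (pow_nonneg hu.le 3) (pow_nonneg (by linarith) 10)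
  have hq4 : (0:ℝ) ≤ u ^ 4 * ((987/400) - u) ^ 9 := mul_nonneg (pow_nonneg hu.le 4) (pow_nonneg (by linarith) 9)
  have hq5 : (0:ℝ) ≤ u ^ 5 * ((987/400) - u) ^ 8 := mul_nonneg (pow_nonneg hu.le 5) (pow_nonneg (by linarith) 8)
  have hq6 : (0:ℝ) ≤ u ^ 6 * ((987/400) - u) ^ 7 := mul_nonneg (pow_nonneg hu.le 6) (pow_nonneg (by linarith) 7)
  have hq7 : (0:ℝ) ≤ u ^ 7 * ((987/400) - u) ^ 6 := mul_nonneg (pow_nonneg hu.le 7) (pow_nonneg (by linarith) 6)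
  have hq8 : (0:ℝ) ≤ u ^ 8 * ((987/400) - u) ^ 5 := mul_nonneg (pow_nonneg hu.le 8) (pow_nonneg (by linarith) 5)
  have hq9 : (0:ℝ) ≤ u ^ 9 * ((987/400) - u) ^ 4 := mul_nonneg (pow_nonneg hu.le 9) (pow_nonneg (by linarith) 4)
  have hq10 : (0:ℝ) ≤ u ^ 10 * ((987/400) - u) ^ 3 := mul_nonneg (pow_nonneg hu.le 10) (pow_nonneg (by linarith) 3)
  have hq11 : (0:ℝ) ≤ u ^ 11 * ((987/400) - u) ^ 2 := mul_nonneg (pow_nonneg hu.le 11) (pow_nonneg (by linarith) 2)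
  have hq12 : (0:ℝ) ≤ u ^ 12 * ((987/400) - u) ^ 1 := mul_nonneg (pow_nonneg hu.le 12) (pow_nonneg (by linarith) 1)
  have hq13 : (0:ℝ) < u ^ 13 := pow_pos hu 13
  linarith

private lemma QHpos (u : ℝ) (hu : 0 < u) (hu2 : u ≤ 36/25) :
    (0:ℝ) < (146777/1312500) - (53088947/378000000) * u + (111853961/1417500000) * u ^ 2 - (233893549/8505000000) * u ^ 3 + (6880607203/1020600000000) * u ^ 4 - (2219578859/1786050000000) * u ^ 5 + (30771601643/171460800000000) * u ^ 6 - (42933707687/2057529600000000) * u ^ 7 + (5972562643/3000564000000000) * u ^ 8 - (10910582741/69132994560000000) * u ^ 9 + (226659335683/21604060800000000000) * u ^ 10 - (237035954287/403275801600000000000) * u ^ 11 + (74755329119/2688505344000000000000) * u ^ 12 - (483184220797/435537865728000000000000) * u ^ 13 + (2265961859393/60975301201920000000000000) * u ^ 14 - (54154054519/52264543887360000000000000) * u ^ 15 + (275413513/11614343086080000000000000) * u ^ 16 - (18223483/41811635109888000000000000) * u ^ 17 + (10915351/1756088674615296000000000000) * u ^ 18 - (3419831/52682660238458880000000000000) *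 u ^ 19 + (46847/105365320476917760000000000000) * u ^ 20 - (46847/30977404220213821440000000000000) * u ^ 21 := by
  have hh0 : (0:ℝ) ≤ u ^ 0 * ((36/25) - u) ^ 21 := mul_nonneg (pow_nonneg hu.le 0) (pow_nonneg (by linarith) 21)
  have hh1 : (0:ℝ) ≤ u ^ 1 * ((36/25) - u) ^ 20 := mul_nonneg (pow_nonneg hu.le 1) (pow_nonneg (by linarith) 20)
  have hh2 : (0:ℝ) ≤ u ^ 2 * ((36/25) - u) ^ 19 := mul_nonneg (pow_nonneg hu.le 2) (pow_nonneg (by linarith) 19)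
  have hh3 : (0:ℝ) ≤ u ^ 3 * ((36/25) - u) ^ 18 := mul_nonneg (pow_nonneg hu.le 3) (pow_nonneg (by linarith) 18)
  have hh4 : (0:ℝ) ≤ u ^ 4 * ((36/25) - u) ^ 17 := mul_nonneg (pow_nonneg hu.le 4) (pow_nonneg (by linarith) 17)
  have hh5 : (0:ℝ) ≤ u ^ 5 * ((36/25) - u) ^ 16 := mul_nonneg (pow_nonneg hu.le 5) (pow_nonneg (by linarith) 16)
  have hh6 : (0:ℝ) ≤ u ^ 6 * ((36/25) - u) ^ 15 := mul_nonneg (pow_nonneg hu.le 6) (pow_nonneg (by linarith) 15)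
  have hh7 : (0:ℝ) ≤ u ^ 7 * ((36/25) - u) ^ 14 := mul_nonneg (pow_nonneg hu.le 7) (pow_nonneg (by linarith) 14)
  have hh8 : (0:ℝ) ≤ u ^ 8 * ((36/25) - u) ^ 13 := mul_nonneg (pow_nonneg hu.le 8) (pow_nonneg (by linarith) 13)
  have hh9 : (0:ℝ) ≤ u ^ 9 * ((36/25) - u) ^ 12 := mul_nonneg (pow_nonneg hu.le 9) (pow_nonneg (by linarith) 12)
  have hh10 : (0:ℝ) ≤ u ^ 10 * ((36/25) - u) ^ 11 := mul_nonneg (pow_nonneg hu.le 10) (pow_nonneg (by linarith) 11)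
  have hh11 : (0:ℝ) ≤ u ^ 11 * ((36/25) - u) ^ 10 := mul_nonneg (pow_nonneg hu.le 11) (pow_nonneg (by linarith) 10)
  have hh12 : (0:ℝ) ≤ u ^ 12 * ((36/25) - u) ^ 9 := mul_nonneg (pow_nonneg hu.le 12) (pow_nonneg (by linarith) 9)
  have hh13 : (0:ℝ) ≤ u ^ 13 * ((36/25) - u) ^ 8 := mul_nonneg (pow_nonneg hu.le 13) (pow_nonneg (by linarith) 8)
  have hh14 : (0:ℝ) ≤ u ^ 14 * ((36/25) - u) ^ 7 := mul_nonneg (pow_nonneg hu.le 14) (pow_nonneg (by linarith) 7)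
  have hh15 : (0:ℝ) ≤ u ^ 15 * ((36/25) - u) ^ 6 := mul_nonneg (pow_nonneg hu.le 15) (pow_nonneg (by linarith) 6)
  have hh16 : (0:ℝ) ≤ u ^ 16 * ((36/25) - u) ^ 5 := mul_nonneg (pow_nonneg hu.le 16) (pow_nonneg (by linarith) 5)
  have hh17 : (0:ℝ) ≤ u ^ 17 * ((36/25) - u) ^ 4 := mul_nonneg (pow_nonneg hu.le 17) (pow_nonneg (by linarith) 4)
  have hh18 : (0:ℝ) ≤ u ^ 18 * ((36/25) - u) ^ 3 := mul_nonneg (pow_nonneg hu.le 18) (pow_nonneg (by linarith) 3)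
  have hh19 : (0:ℝ) ≤ u ^ 19 * ((36/25) - u) ^ 2 := mul_nonneg (pow_nonneg hu.le 19) (pow_nonneg (by linarith) 2)
  have hh20 : (0:ℝ) ≤ u ^ 20 * ((36/25) - u) ^ 1 := mul_nonneg (pow_nonneg hu.le 20) (pow_nonneg (by linarith) 1)
  have hh21 : (0:ℝ) < u ^ 21 := pow_pos hu 21
  linarith

private lemma lemA (θ : ℝ) (h0 : 0 < θ) (h2 : θ ≤ 15708/10000) :
    3 * Real.sin θ + Real.sin θ ^ 5 / 60 + 11 * Real.sin θ ^ 7 / 840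
      < (2 + Real.cos θ) * θ := by
  have hπ := Real.pi_gt_d6
  have hs0 : 0 ≤ Real.sin θ := Real.sin_nonneg_of_nonneg_of_le_pi h0.le (by linarith)
  have hS5 : Real.sin θ ≤ θ - θ ^ 3 / 6 + θ ^ 5 / 120 := sin_le5 h0.le
  have hS9 : Real.sin θ ≤ θ - θ ^ 3 / 6 + θ ^ 5 / 120 - θ ^ 7 / 5040 + θ ^ 9 / 362880 :=
    sin_le9 h0.le
  have hC6 : 1 - θ ^ 2 / 2 + θ ^ 4 / 24 - θ ^ 6 / 720 ≤ Real.cos θ := cos_ge6 h0.le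
  have h5 : Real.sin θ ^ 5 ≤ (θ - θ ^ 3 / 6 + θ ^ 5 / 120) ^ 5 := pow_le_pow_left₀ hs0 hS5 5
  have h7 : Real.sin θ ^ 7 ≤ (θ - θ ^ 3 / 6 + θ ^ 5 / 120) ^ 7 := pow_le_pow_left₀ hs0 hS5 7
  have hu : 0 < θ ^ 2 := by positivity
  have hu2 : θ ^ 2 ≤ 987/400 := by
    nlinarith [mul_nonneg (by linarith : (0:ℝ) ≤ 15708/10000 - θ)
      (by linarith : (0:ℝ) ≤ 15708/10000 + θ)]
  have hQ := Qpos (θ ^ 2) hu hu2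
  have h9 : 0 < θ ^ 9 * ((401/40320) - (929/129600) * (θ ^ 2) + (419/155520) * (θ ^ 2) ^ 2 - (31271/46656000) * (θ ^ 2) ^ 3 + (2809/23328000) * (θ ^ 2) ^ 4 - (18241/1119744000) * (θ ^ 2) ^ 5 + (796711/470292480000) * (θ ^ 2) ^ 6 - (2291/16796160000) * (θ ^ 2) ^ 7 + (12649/1492992000000) * (θ ^ 2) ^ 8 - (10747/26873856000000) * (θ ^ 2) ^ 9 + (187/13436928000000) * (θ ^ 2) ^ 10 - (121/358318080000000) * (θ ^ 2) ^ 11 + (11/2149908480000000) * (θ ^ 2) ^ 12 - (11/300987187200000000) * (θ ^ 2) ^ 13) := mul_pos (pow_pos h0 9) hQ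
  have hkey : 3 * (θ - θ ^ 3 / 6 + θ ^ 5 / 120 - θ ^ 7 / 5040 + θ ^ 9 / 362880)
      + (θ - θ ^ 3 / 6 + θ ^ 5 / 120) ^ 5 / 60
      + 11 * (θ - θ ^ 3 / 6 + θ ^ 5 / 120) ^ 7 / 840
      + θ ^ 9 * ((401/40320) - (929/129600) * (θ ^ 2) + (419/155520) * (θ ^ 2) ^ 2 - (31271/46656000) * (θ ^ 2) ^ 3 + (2809/23328000) * (θ ^ 2) ^ 4 - (18241/1119744000) * (θ ^ 2) ^ 5 + (796711/470292480000) * (θ ^ 2) ^ 6 - (2291/16796160000) * (θ ^ 2) ^ 7 + (12649/1492992000000) * (θ ^ 2) ^ 8 - (10747/26873856000000) * (θ ^ 2) ^ 9 + (187/13436928000000) * (θ ^ 2) ^ 10 - (121/358318080000000) * (θ ^ 2) ^ 11 + (11/2149908480000000) * (θ ^ 2) ^ 12 - (11/300987187200000000) * (θ ^ 2) ^ 13)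
      = (2 + (1 - θ ^ 2 / 2 + θ ^ 4 / 24 - θ ^ 6 / 720)) * θ := by ring
  have hmul : (2 + (1 - θ ^ 2 / 2 + θ ^ 4 / 24 - θ ^ 6 / 720)) * θ ≤ (2 + Real.cos θ) * θ :=
    mul_le_mul_of_nonneg_right (by linarith) h0.le
  linarith [hS9, h5, h7, h9, hkey, hmul]

private lemma lemBA (θ : ℝ) (h0 : 0 < θ) (h2 : θ ≤ 6/5) :
    (2 + Real.cos θ) * θ
      < 3 * Real.sin θ + Real.sin θ ^ 5 / 60 + (π - 181/60) * Real.sin θ ^ 7 := by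
  have hπ := Real.pi_gt_d6
  have hS7 : θ - θ ^ 3 / 6 + θ ^ 5 / 120 - θ ^ 7 / 5040 ≤ Real.sin θ := sin_ge7 h0.le
  have hC8 : Real.cos θ ≤ 1 - θ ^ 2 / 2 + θ ^ 4 / 24 - θ ^ 6 / 720 + θ ^ 8 / 40320 :=
    cos_le8 h0.le
  have hu : 0 < θ ^ 2 := by positivity
  have hu2 : θ ^ 2 ≤ 36/25 := by
    nlinarith [mul_nonneg (by linarith : (0:ℝ) ≤ 6/5 - θ) (by linarith : (0:ℝ) ≤ 6/5 + θ)]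
  have e1 : 0 < θ * (1 - θ ^ 2 / 6) := mul_pos h0 (by linarith)
  have e2 : 0 ≤ θ ^ 5 * (1 - θ ^ 2 / 42) := mul_nonneg (pow_nonneg h0.le 5) (by linarith)
  have hS7pos : 0 < θ - θ ^ 3 / 6 + θ ^ 5 / 120 - θ ^ 7 / 5040 := by nlinarith [e1, e2]
  have h5 : (θ - θ ^ 3 / 6 + θ ^ 5 / 120 - θ ^ 7 / 5040) ^ 5 ≤ Real.sin θ ^ 5 :=
    pow_le_pow_left₀ hS7pos.le hS7 5
  have h7 : (θ - θ ^ 3 / 6 + θ ^ 5 / 120 - θ ^ 7 / 5040) ^ 7 ≤ Real.sin θ ^ 7 :=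
    pow_le_pow_left₀ hS7pos.le hS7 7
  have hs7nn : (0:ℝ) ≤ Real.sin θ ^ 7 := le_trans (pow_nonneg hS7pos.le 7) h7
  have hsin7 : (3141592/1000000 - 181/60) * Real.sin θ ^ 7 ≤ (π - 181/60) * Real.sin θ ^ 7 := by
    nlinarith [mul_nonneg (by linarith : (0:ℝ) ≤ π - 3141592/1000000) hs7nn]
  have hQ := QHpos (θ ^ 2) hu hu2
  have h7p : 0 < θ ^ 7 * ((146777/1312500) - (53088947/378000000) * (θ ^ 2) + (111853961/1417500000) * (θ ^ 2) ^ 2 - (233893549/8505000000) * (θ ^ 2) ^ 3 + (6880607203/1020600000000) * (θ ^ 2) ^ 4 - (2219578859/1786050000000) * (θ ^ 2) ^ 5 + (30771601643/171460800000000) * (θ ^ 2) ^ 6 - (42933707687/2057529600000000) * (θ ^ 2) ^ 7 + (5972562643/3000564000000000) * (θ ^ 2) ^ 8 - (10910582741/69132994560000000) * (θ ^ 2) ^ 9 + (226659335683/21604060800000000000) * (θ ^ 2) ^ 10 - (237035954287/403275801600000000000) * (θ ^ 2) ^ 11 + (74755329119/2688505344000000000000) * (θ ^ 2) ^ 12 -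 (483184220797/435537865728000000000000) * (θ ^ 2) ^ 13 + (2265961859393/60975301201920000000000000) * (θ ^ 2) ^ 14 - (54154054519/52264543887360000000000000) * (θ ^ 2) ^ 15 + (275413513/11614343086080000000000000) * (θ ^ 2) ^ 16 - (18223483/41811635109888000000000000) * (θ ^ 2) ^ 17 + (10915351/1756088674615296000000000000) * (θ ^ 2) ^ 18 - (3419831/52682660238458880000000000000) * (θ ^ 2) ^ 19 + (46847/105365320476917760000000000000) * (θ ^ 2) ^ 20 - (46847/30977404220213821440000000000000) * (θ ^ 2) ^ 21) := mul_pos (pow_pos h0 7) hQ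
  have hkey : (2 + (1 - θ ^ 2 / 2 + θ ^ 4 / 24 - θ ^ 6 / 720 + θ ^ 8 / 40320)) * θ
      + θ ^ 7 * ((146777/1312500) - (53088947/378000000) * (θ ^ 2) + (111853961/1417500000) * (θ ^ 2) ^ 2 - (233893549/8505000000) * (θ ^ 2) ^ 3 + (6880607203/1020600000000) * (θ ^ 2) ^ 4 - (2219578859/1786050000000) * (θ ^ 2) ^ 5 + (30771601643/171460800000000) * (θ ^ 2) ^ 6 - (42933707687/2057529600000000) * (θ ^ 2) ^ 7 + (5972562643/3000564000000000) * (θ ^ 2) ^ 8 - (10910582741/69132994560000000) * (θ ^ 2) ^ 9 + (226659335683/21604060800000000000) * (θ ^ 2) ^ 10 - (237035954287/403275801600000000000) * (θ ^ 2) ^ 11 + (74755329119/2688505344000000000000) * (θ ^ 2) ^ 12 - (483184220797/435537865728000000000000) * (θ ^ 2) ^ 13 + (2265961859393/60975301201920000000000000) * (θ ^ 2) ^ 14 - (54154054519/52264543887360000000000000) * (θ ^ 2) ^ 15 + (275413513/11614343086080000000000000) * (θ ^ 2) ^ 16 - (18223483/41811635109888000000000000) * (θ ^ 2) ^ 17 +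 (10915351/1756088674615296000000000000) * (θ ^ 2) ^ 18 - (3419831/52682660238458880000000000000) * (θ ^ 2) ^ 19 + (46847/105365320476917760000000000000) * (θ ^ 2) ^ 20 - (46847/30977404220213821440000000000000) * (θ ^ 2) ^ 21)
      = 3 * (θ - θ ^ 3 / 6 + θ ^ 5 / 120 - θ ^ 7 / 5040)
        + (θ - θ ^ 3 / 6 + θ ^ 5 / 120 - θ ^ 7 / 5040) ^ 5 / 60
        + (3141592/1000000 - 181/60) * (θ - θ ^ 3 / 6 + θ ^ 5 / 120 - θ ^ 7 / 5040) ^ 7 := by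
    ring
  have hmul : (2 + Real.cos θ) * θ
      ≤ (2 + (1 - θ ^ 2 / 2 + θ ^ 4 / 24 - θ ^ 6 / 720 + θ ^ 8 / 40320)) * θ :=
    mul_le_mul_of_nonneg_right (by linarith) h0.le
  linarith [hS7, h5, h7, hsin7, h7p, hkey, hmul]

private lemma lemBB (θ : ℝ) (h1 : 6/5 ≤ θ) (h2 : θ < π/2) :
    (2 + Real.cos θ) * θ
      < 3 * Real.sin θ + Real.sin θ ^ 5 / 60 + (π - 181/60) * Real.sin θ ^ 7 := by
  have hπ := Real.pi_gt_d6
  have hπ' := Real.pi_lt_d6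
  set H : ℝ → ℝ := fun t => (π - 181/60) * Real.sin t ^ 7 + Real.sin t ^ 5 / 60
      + 3 * Real.sin t - 2 * t - t * Real.cos t with hH
  have hd1 : ∀ t : ℝ, HasDerivAt H
      (7 * (π - 181/60) * Real.sin t ^ 6 * Real.cos t + Real.sin t ^ 4 * Real.cos t / 12
        + 2 * Real.cos t - 2 + t * Real.sin t) t := by
    intro t
    have h := ((((((Real.hasDerivAt_sin t).pow 7).const_mul (π - 181/60)).add
        (((Real.hasDerivAt_sin t).pow 5).div_const 60)).add
        ((Real.hasDerivAt_sin t).const_mul 3)).sub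
        ((hasDerivAt_id' t).const_mul 2)).sub
        ((hasDerivAt_id' t).mul (Real.hasDerivAt_cos t))
    rw [hH]
    refine h.congr_deriv ?_
    push_cast
    ring
  have hd2 : ∀ t : ℝ, HasDerivAt
      (fun t => 7 * (π - 181/60) * Real.sin t ^ 6 * Real.cos t
        + Real.sin t ^ 4 * Real.cos t / 12 + 2 * Real.cos t - 2 + t * Real.sin t)
      (7 * (π - 181/60) * (6 * Real.sin t ^ 5 * Real.cos t ^ 2 - Real.sin t ^ 7)
        + (4 * Real.sin t ^ 3 * Real.cos t ^ 2 - Real.sin t ^ 5) / 12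
        - Real.sin t + t * Real.cos t) t := by
    intro t
    have h := (((((((Real.hasDerivAt_sin t).pow 6).const_mul (7 * (π - 181/60))).mul
        (Real.hasDerivAt_cos t)).add
        ((((Real.hasDerivAt_sin t).pow 4).mul (Real.hasDerivAt_cos t)).div_const 12)).add
        ((Real.hasDerivAt_cos t).const_mul 2)).sub (hasDerivAt_const t (2:ℝ))).add
        ((hasDerivAt_id' t).mul (Real.hasDerivAt_sin t))
    refine h.congr_deriv ?_
    push_cast
    simp only [Pi.pow_apply]
    ring
  have hHc : Continuous H := by
    rw [hH]
    fun_prop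
  have hab : (6:ℝ)/5 < π/2 := by linarith
  have hconc : ConcaveOn ℝ (Set.Icc (6/5) (π/2)) H := by
    refine concaveOn_of_hasDerivWithinAt2_nonpos (convex_Icc _ _) hHc.continuousOn
      (fun x _ => (hd1 x).hasDerivWithinAt) (fun x _ => (hd2 x).hasDerivWithinAt) ?_
    intro x hx
    rw [interior_Icc] at hx
    obtain ⟨hx1, hx2⟩ := hx
    have hsmono : Real.sin (6/5) ≤ Real.sin x :=
      Real.sin_le_sin_of_le_of_le_pi_div_two (by linarith) hx2.le hx1.le
    have hr := sin_ge7 (show (0:ℝ) ≤ 6/5 by norm_num)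
    have hs : (932/1000 : ℝ) ≤ Real.sin x := by nlinarith [hr, hsmono]
    have hcmono : Real.cos x ≤ Real.cos (6/5) :=
      Real.cos_le_cos_of_nonneg_of_le_pi (by norm_num) (by linarith) hx1.le
    have hc12 := cos_le4 (show (0:ℝ) ≤ 6/5 by norm_num)
    have hc : Real.cos x ≤ 229/625 := by nlinarith [hcmono, hc12]
    have hc0 : 0 ≤ Real.cos x := Real.cos_nonneg_of_mem_Icc ⟨by linarith, hx2.le⟩
    have hs1 : Real.sin x ≤ 1 := Real.sin_le_one x
    have hs0 : 0 ≤ Real.sin x := by linarith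
    have hpyth : Real.sin x ^ 2 + Real.cos x ^ 2 = 1 := Real.sin_sq_add_cos_sq x
    have hxu : x ≤ 15708/10000 := by linarith
    have hA : 6 * Real.cos x ^ 2 - Real.sin x ^ 2 ≤ 0 := by
      nlinarith [sq_nonneg (Real.sin x - 932/1000)]
    have hB : 4 * Real.cos x ^ 2 - Real.sin x ^ 2 ≤ 0 := by
      nlinarith [sq_nonneg (Real.sin x - 932/1000)]
    have hT1 : 7 * (π - 181/60) * (6 * Real.sin x ^ 5 * Real.cos x ^ 2 - Real.sin x ^ 7) ≤ 0 := by
      have ha : (0:ℝ) ≤ 7 * (π - 181/60) := by linarith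
      have hb : 6 * Real.sin x ^ 5 * Real.cos x ^ 2 - Real.sin x ^ 7 ≤ 0 := by
        nlinarith [mul_nonneg (pow_nonneg hs0 5) (by linarith : (0:ℝ) ≤ Real.sin x ^ 2 - 6 * Real.cos x ^ 2)]
      nlinarith [mul_nonneg ha (by linarith : (0:ℝ) ≤ -(6 * Real.sin x ^ 5 * Real.cos x ^ 2 - Real.sin x ^ 7))]
    have hT2 : 4 * Real.sin x ^ 3 * Real.cos x ^ 2 - Real.sin x ^ 5 ≤ 0 := by
      nlinarith [mul_nonneg (pow_nonneg hs0 3) (by linarith : (0:ℝ) ≤ Real.sin x ^ 2 - 4 * Real.cos x ^ 2)]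
    have hT3 : x * Real.cos x ≤ Real.sin x := by
      have := mul_le_mul_of_nonneg_right hxu hc0
      linarith
    linarith [hT1, hT2, hT3]
  have hH12 : 0 < H (6/5) := by
    have h := lemBA (6/5) (by norm_num) (le_refl _)
    rw [hH]
    simp only
    nlinarith [h]
  have hHb : H (π/2) = 0 := by
    rw [hH]
    simp only
    rw [Real.sin_pi_div_two, Real.cos_pi_div_two]
    ring
  have hba : (0:ℝ) < π/2 - 6/5 := by linarith
  have hlam : 0 < (π/2 - θ)/(π/2 - 6/5) := div_pos (by linarith) hba
  have hmu : 0 ≤ (θ - 6/5)/(π/2 - 6/5) := div_nonneg (by linarith) hba.le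
  have hsum : (π/2 - θ)/(π/2 - 6/5) + (θ - 6/5)/(π/2 - 6/5) = 1 := by
    rw [← add_div, div_eq_one_iff_eq hba.ne']
    ring
  have h := hconc.2 (Set.mem_Icc.2 ⟨le_refl _, hab.le⟩)
    (Set.mem_Icc.2 ⟨hab.le, le_refl _⟩) hlam.le hmu hsum
  rw [smul_eq_mul, smul_eq_mul, smul_eq_mul, smul_eq_mul] at h
  have hcomb : (π/2 - θ)/(π/2 - 6/5) * (6/5) + (θ - 6/5)/(π/2 - 6/5) * (π/2) = θ := by
    rw [div_mul_eq_mul_div, div_mul_eq_mul_div, ← add_div, div_eq_iff hba.ne']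
    ring
  rw [hcomb, hHb] at h
  have hpos : 0 < (π/2 - θ)/(π/2 - 6/5) * H (6/5) := mul_pos hlam hH12
  rw [mul_zero, add_zero] at h
  have hHθ : 0 < H θ := lt_of_lt_of_le hpos h
  rw [hH] at hHθ
  simp only at hHθ
  linarith

theorem shaferE_n3 (x : ℝ) (hx : x ∈ Set.Ioo (0 : ℝ) 1) :
    (x ^ 5 / 60 + 11 * x ^ 7 / 840) / (2 + Real.sqrt (1 - x ^ 2))
      < Real.arcsin x - 3 * x / (2 + Real.sqrt (1 - x ^ 2)) ∧
    Real.arcsin x - 3 * x / (2 + Real.sqrt (1 - x ^ 2))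
      < (x ^ 5 / 60 + (π - 181 / 60) * x ^ 7) / (2 + Real.sqrt (1 - x ^ 2)) := by
  obtain ⟨hx0, hx1⟩ := hx
  have hπ := Real.pi_gt_d6
  have hπ' := Real.pi_lt_d6
  have hθ0 : 0 < Real.arcsin x := Real.arcsin_pos.2 hx0
  have hθπ : Real.arcsin x < π/2 := Real.arcsin_lt_pi_div_two.2 hx1
  have hsin : Real.sin (Real.arcsin x) = x := Real.sin_arcsin (by linarith) hx1.le
  have hcos : Real.cos (Real.arcsin x) = Real.sqrt (1 - x ^ 2) := Real.cos_arcsin x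
  have hD : 0 < 2 + Real.sqrt (1 - x ^ 2) := by positivity
  constructor
  · rw [lt_sub_iff_add_lt, ← add_div, div_lt_iff₀ hD]
    have h := lemA (Real.arcsin x) hθ0 (by linarith)
    rw [hsin, hcos] at h
    linarith [h]
  · rw [sub_lt_iff_lt_add, ← add_div, lt_div_iff₀ hD]
    rcases le_or_gt (Real.arcsin x) (6/5) with hc | hc
    · have h := lemBA (Real.arcsin x) hθ0 hc
      rw [hsin, hcos] at h
      linarith [h]
    · have h := lemBB (Real.arcsin x) hc.le hθπ
      rw [hsin, hcos] at h
      linarith [h]
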